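/- Let P be a formula-based program, α a countable ordinal, and for every γ < α let I_γ be an interpretation such that I_ζ =_ζ I_γ for all ζ < γ < α. If I_γ ⊑_{γ+1} T_P(I_γ) holds for all γ < α, then ⊔_{γ<α} I_γ ⊑_α T_P(⊔_{γ<α} I_γ). -/

import Mathlib

/-!
Infinite-valued semantics for formula-based logic programs
(Rondogiannis–Wadge style), following Lüdecke,
"Every Formula-Based Logic Program Has a Least Infinite-Valued Model".
-/

noncomputable section

namespace ILP

attribute [local instance] Classical.propDecidable

/-- The first uncountable ordinal. -/
def omega1 : Ordinal.{0} := Ordinal.omega 1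

lemma omega1_isLimit : Order.IsSuccLimit omega1 := Cardinal.isSuccLimit_omega 1

lemma zero_lt_omega1 : (0 : Ordinal) < omega1 := pos_iff_ne_zero.2 omega1_isLimit.ne_bot

lemma succ_lt_omega1 {a : Ordinal} (h : a < omega1) : a + 1 < omega1 := by
  rw [Ordinal.add_one_eq_succ]
  exact omega1_isLimit.succ_lt h

/-- Pre-truth-values: `F α`, `0`, `T α` for arbitrary ordinals `α`. -/
inductive TVPre : Type 1 where
  | F : Ordinal → TVPre
  | zero : TVPre
  | T : Ordinal → TVPre

/-- A pre-truth-value is countable if its index is a countable ordinal. -/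
def TVPre.countable : TVPre → Prop
  | .F a => a < omega1
  | .zero => True
  | .T a => a < omega1

/-- The set `W` of truth values:
`F_α` (false values) for countable `α`, `0`, and `T_α` (true values) for countable `α`. -/
def W : Type 1 := {v : TVPre // v.countable}

/-- The strict order on truth values:
`F_0 < F_1 < ... < 0 < ... < T_1 < T_0`. -/
def TVPre.lt : TVPre → TVPre → Prop
  | .F a, .F b => a < b
  | .F _, .zero => True
  | .F _, .T _ => True
  | .zero, .T _ => True
  | .T a, .T b => b < a
  | _, _ => False

instance : LT W := ⟨fun x y => TVPre.lt x.1 y.1⟩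

instance : LE W := ⟨fun x y => x = y ∨ x < y⟩

lemma TVPre.lt_trans {a b c : TVPre} (hab : a.lt b) (hbc : b.lt c) : a.lt c := by
  cases a <;> cases b <;> cases c <;> simp_all [TVPre.lt] <;>
    first | exact hab.trans hbc | exact hbc.trans hab

lemma TVPre.lt_irrefl {a : TVPre} (h : a.lt a) : False := by
  cases a <;> simp_all [TVPre.lt]

instance instLinearOrderW : LinearOrder W where
  le_refl a := Or.inl rfl
  le_trans a b c hab hbc := by
    rcases hab with rfl | hab
    · exact hbc
    rcases hbc with rfl | hbc
    · exact Or.inr hab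
    · exact Or.inr (TVPre.lt_trans hab hbc)
  le_antisymm a b hab hba := by
    rcases hab with rfl | hab
    · rfl
    rcases hba with rfl | hba
    · rfl
    exact absurd (TVPre.lt_trans hab hba) TVPre.lt_irrefl
  le_total a b := by
    obtain ⟨a1, ha⟩ := a
    obtain ⟨b1, hb⟩ := b
    have tri : a1 = b1 ∨ a1.lt b1 ∨ b1.lt a1 := by
      cases a1 <;> cases b1 <;> simp [TVPre.lt] <;> (try rename_i x y) <;>
        (try rcases lt_trichotomy x y with h | h | h) <;> tauto
    rcases tri with h | h | h
    · exact Or.inl (Or.inl (Subtype.ext h))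
    · exact Or.inl (Or.inr h)
    · exact Or.inr (Or.inr h)
  lt_iff_le_not_ge a b := by
    constructor
    · intro h
      refine ⟨Or.inr h, ?_⟩
      rintro (rfl | h')
      · exact TVPre.lt_irrefl h
      · exact TVPre.lt_irrefl (TVPre.lt_trans h h')
    · rintro ⟨rfl | h, h2⟩
      · exact absurd (Or.inl rfl) h2
      · exact h
  toDecidableLE := Classical.decRel _

/-- The false value `F_α`. -/
def WF (a : Ordinal) (h : a < omega1) : W := ⟨.F a, h⟩

/-- The true value `T_α`. -/
def WT (a : Ordinal) (h : a < omega1) : W := ⟨.T a, h⟩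

/-- The undefined value `0`. -/
def WZ : W := ⟨.zero, trivial⟩

/-- `deg w < α` : the degree of `w` (which is `∞` for `0`) is less than `α`. -/
def degLT (w : W) (α : Ordinal) : Prop :=
  match w.1 with
  | .F a => a < α
  | .zero => False
  | .T a => a < α

/-- The set of indices of true values occurring in `M`. -/
def TIdx (M : Set W) : Set Ordinal := {a | ∃ w ∈ M, w.1 = TVPre.T a}

/-- The set of indices of false values occurring in `M`. -/
def FIdx (M : Set W) : Set Ordinal := {a | ∃ w ∈ M, w.1 = TVPre.F a}

lemma mem_lt_omega1_of_TIdx {M : Set W} {a : Ordinal} (h : a ∈ TIdx M) : a < omega1 := by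
  obtain ⟨w, _, hw⟩ := h
  have := w.2
  rw [hw] at this
  exact this

lemma mem_lt_omega1_of_FIdx {M : Set W} {a : Ordinal} (h : a ∈ FIdx M) : a < omega1 := by
  obtain ⟨w, _, hw⟩ := h
  have := w.2
  rw [hw] at this
  exact this

/-- The least upper bound of a subset of `W`. -/
def Wsup (M : Set W) : W :=
  if h : (TIdx M).Nonempty then
    WT (sInf (TIdx M))
      (lt_of_le_of_lt (csInf_le' h.choose_spec) (mem_lt_omega1_of_TIdx h.choose_spec))
  else if WZ ∈ M then WZ
  else if h2 : sSup (FIdx M) < omega1 then WF (sSup (FIdx M)) h2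
  else WZ

/-- The greatest lower bound of a subset of `W`. -/
def Winf (M : Set W) : W :=
  if h : (FIdx M).Nonempty then
    WF (sInf (FIdx M))
      (lt_of_le_of_lt (csInf_le' h.choose_spec) (mem_lt_omega1_of_FIdx h.choose_spec))
  else if WZ ∈ M then WZ
  else if h2 : sSup (TIdx M) < omega1 then WT (sSup (TIdx M)) h2
  else WZ

/-- The semantics of negation on `W`. -/
def Wneg : W → W
  | ⟨.F a, h⟩ => WT (a + 1) (succ_lt_omega1 h)
  | ⟨.zero, _⟩ => WZ
  | ⟨.T a, h⟩ => WF (a + 1) (succ_lt_omega1 h)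

/-! ### Syntax -/

/-- A first-order language with finitely many predicate symbols (at least one),
finitely many function symbols and finitely many constants (at least one). -/
structure Language where
  nPred : ℕ
  predAr : Fin nPred → ℕ
  nFun : ℕ
  funAr : Fin nFun → ℕ
  nConst : ℕ
  npos : 1 ≤ nPred
  cpos : 1 ≤ nConst

variable {L : Language}

/-- Terms of the language; variables are indexed by natural numbers. -/
inductive Term (L : Language) : Type where
  | var : ℕ → Term L
  | const : Fin L.nConst → Term L
  | func : (f : Fin L.nFun) → (Fin (L.funAr f) → Term L) → Term L

/-- A term is ground if it contains no variables. -/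
def Term.ground : Term L → Prop
  | .var _ => False
  | .const _ => True
  | .func _ ts => ∀ i, (ts i).ground

/-- The Herbrand universe: the set of ground terms. -/
def HU (L : Language) : Type := {t : Term L // t.ground}

/-- Formulas of the language. -/
inductive Formula (L : Language) : Type where
  | verum : Formula L
  | falsum : Formula L
  | atom : (p : Fin L.nPred) → (Fin (L.predAr p) → Term L) → Formula L
  | neg : Formula L → Formula L
  | conj : Formula L → Formula L → Formula L
  | disj : Formula L → Formula L → Formula L
  | all : ℕ → Formula L → Formula L
  | ex : ℕ → Formula L → Formula L

/-- A ground atom: a predicate symbol applied to ground terms.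
The Herbrand base `H_B` is the type of ground atoms. -/
structure GroundAtom (L : Language) : Type where
  pred : Fin L.nPred
  args : Fin (L.predAr pred) → HU L

/-- An (infinite-valued Herbrand) interpretation. -/
def Interp (L : Language) : Type 1 := GroundAtom L → W

/-- Evaluation of a term under a variable assignment. -/
def Term.evalT (h : ℕ → HU L) : Term L → HU L
  | .var n => h n
  | .const c => ⟨.const c, trivial⟩
  | .func f ts => ⟨.func f fun i => ((ts i).evalT h).1, fun i => ((ts i).evalT h).2⟩

/-- The infinite-valued semantics of formulas, relative to an interpretation and
a variable assignment. -/
def Formula.eval (I : Interp L) : Formula L → (ℕ → HU L) → W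
  | .verum, _ => WT 0 zero_lt_omega1
  | .falsum, _ => WF 0 zero_lt_omega1
  | .atom p ts, h => I ⟨p, fun i => (ts i).evalT h⟩
  | .neg φ, h => Wneg (φ.eval I h)
  | .conj φ ψ, h => min (φ.eval I h) (ψ.eval I h)
  | .disj φ ψ, h => max (φ.eval I h) (ψ.eval I h)
  | .ex v φ, h => Wsup (Set.range fun u : HU L => φ.eval I (Function.update h v u))
  | .all v φ, h => Winf (Set.range fun u : HU L => φ.eval I (Function.update h v u))

/-- The variables occurring in a term. -/
def Term.vars : Term L → Set ℕ
  | .var n => {n}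
  | .const _ => ∅
  | .func _ ts => ⋃ i, (ts i).vars

/-- The free variables of a formula. -/
def Formula.freeVars : Formula L → Set ℕ
  | .verum => ∅
  | .falsum => ∅
  | .atom _ ts => ⋃ i, (ts i).vars
  | .neg φ => φ.freeVars
  | .conj φ ψ => φ.freeVars ∪ ψ.freeVars
  | .disj φ ψ => φ.freeVars ∪ ψ.freeVars
  | .all v φ => φ.freeVars \ {v}
  | .ex v φ => φ.freeVars \ {v}

/-- Applying a substitution to a term. -/
def Term.subst (σ : ℕ → Term L) : Term L → Term L
  | .var n => σ n
  | .const c => .const c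
  | .func f ts => .func f fun i => (ts i).subst σ

/-- Applying a substitution to a formula (bound variables are not substituted). -/
def Formula.subst (σ : ℕ → Term L) : Formula L → Formula L
  | .verum => .verum
  | .falsum => .falsum
  | .atom p ts => .atom p fun i => (ts i).subst σ
  | .neg φ => .neg (φ.subst σ)
  | .conj φ ψ => .conj (φ.subst σ) (ψ.subst σ)
  | .disj φ ψ => .disj (φ.subst σ) (ψ.subst σ)
  | .all v φ => .all v (φ.subst (Function.update σ v (Term.var v)))
  | .ex v φ => .ex v (φ.subst (Function.update σ v (Term.var v)))

/-- A formula-based rule `A ← φ`: the head is an atom `P(t₁,…,tₛ)`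
(hence distinct from `⊤` and `⊥`) and the body is an arbitrary formula. -/
structure Rule (L : Language) : Type where
  headPred : Fin L.nPred
  headArgs : Fin (L.predAr headPred) → Term L
  body : Formula L

/-- The head of a rule, as an atomic formula. -/
def Rule.headAtom (r : Rule L) : Formula L := .atom r.headPred r.headArgs

/-- A formula-based logic program: a finite set of formula-based rules. -/
structure Program (L : Language) : Type where
  rules : Set (Rule L)
  finite : rules.Finite

/-- The set `P_G` of ground instances of a program `P`: pairs `(Aσ, φσ)` obtained
from a rule `A ← φ` of `P` and a substitution `σ` such that `Aσ` is a ground atom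
and `φσ` has no free variables. -/
def groundInstances (P : Program L) : Set (GroundAtom L × Formula L) :=
  {Aφ | ∃ r ∈ P.rules, ∃ σ : ℕ → Term L,
    (∃ hg : ∀ i, ((r.headArgs i).subst σ).ground,
      Aφ.1 = ⟨r.headPred, fun i => ⟨(r.headArgs i).subst σ, hg i⟩⟩) ∧
    Aφ.2 = r.body.subst σ ∧ (r.body.subst σ).freeVars = ∅}

/-- A default variable assignment (possible since there is at least one constant). -/
def defaultAssignment (L : Language) : ℕ → HU L :=
  fun _ => ⟨.const ⟨0, L.cpos⟩, trivial⟩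

/-- The value of a closed formula (independent of the variable assignment). -/
def Formula.evalClosed (I : Interp L) (φ : Formula L) : W :=
  φ.eval I (defaultAssignment L)

/-- The immediate consequence operator `T_P`. -/
def TP (P : Program L) (I : Interp L) : Interp L :=
  fun A => Wsup {w | ∃ φ : Formula L, (A, φ) ∈ groundInstances P ∧ w = φ.evalClosed I}

/-- `I ∥ F_β` : the set of ground atoms receiving value `F_β` under `I`. -/
def Ifalse (I : Interp L) (β : Ordinal) : Set (GroundAtom L) := {A | (I A).1 = TVPre.F β}

/-- `I ∥ T_β` : the set of ground atoms receiving value `T_β` under `I`. -/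
def Itrue (I : Interp L) (β : Ordinal) : Set (GroundAtom L) := {A | (I A).1 = TVPre.T β}

/-- `I =_α J`. -/
def eqa (α : Ordinal) (I J : Interp L) : Prop :=
  ∀ β ≤ α, Ifalse I β = Ifalse J β ∧ Itrue I β = Itrue J β

/-- `I ⊑_α J`. -/
def sqa (α : Ordinal) (I J : Interp L) : Prop :=
  (∀ β < α, eqa β I J) ∧ Ifalse J α ⊆ Ifalse I α ∧ Itrue I α ⊆ Itrue J α

/-- `I ⊏_α J`. -/
def sqlt (α : Ordinal) (I J : Interp L) : Prop := sqa α I J ∧ ¬ eqa α I J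

/-- `I ⊑_∞ J`. -/
def sqinf (I J : Interp L) : Prop := I = J ∨ ∃ α < omega1, sqlt α I J

/-- `I` satisfies the rule `A ← φ`. -/
def satisfies (I : Interp L) (r : Rule L) : Prop :=
  ∀ h : ℕ → HU L, r.body.eval I h ≤ r.headAtom.eval I h

/-- `I` is a model of `P`. -/
def isModel (I : Interp L) (P : Program L) : Prop := ∀ r ∈ P.rules, satisfies I r

/-- The transfinite iterates `T^β_{P,α}(I)`. -/
def iter (P : Program L) (α : Ordinal) (hα : α < omega1) (I : Interp L)
    (β : Ordinal) : Interp L :=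
  Ordinal.limitRecOn β I (fun _ J => TP P J)
    (fun β _ ih A =>
      if degLT (I A) α then I A
      else if ∃ γ, ∃ hγ : γ < β, (ih γ hγ A).1 = TVPre.T α then WT α hα
      else if ∀ γ, ∀ hγ : γ < β, (ih γ hγ A).1 = TVPre.F α then WF α hα
      else WF (α + 1) (succ_lt_omega1 hα))

/-- The union `⊔_{γ<α} I_γ` of a family of interpretations. -/
def unionInterp (α : Ordinal) (hα : α < omega1) (Ig : ∀ γ, γ < α → Interp L) :
    Interp L := fun A =>
  if h : ∃ ζ, ∃ hζ : ζ < α, ((Ig ζ hζ) A).1 = TVPre.F ζ ∨ ((Ig ζ hζ) A).1 = TVPre.T ζ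
  then Ig h.choose h.choose_spec.choose A
  else WF α hα

/-- The approximants `M_α` of a program `P`. -/
def approx (P : Program L) (α : Ordinal) : Interp L :=
  if hα : α < omega1 then
    if (∀ γ, ∀ _ : γ < α, ∀ ζ, ζ < γ → eqa ζ (approx P ζ) (approx P γ)) ∧
        sqa α (unionInterp α hα fun γ _ => approx P γ)
          (TP P (unionInterp α hα fun γ _ => approx P γ))
    then iter P α hα (unionInterp α hα fun γ _ => approx P γ) omega1
    else fun _ => WF 0 zero_lt_omega1
  else fun _ => WF 0 zero_lt_omega1
termination_by α
decreasing_by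
  all_goals first | assumption | exact lt_trans ‹_› ‹_›

/-- The depth `δ_P` of a program `P`. -/
def depth (P : Program L) : Ordinal :=
  sInf {δ | δ < omega1 ∧ ∀ γ, δ ≤ γ → γ < omega1 →
    Ifalse (approx P γ) γ = ∅ ∧ Itrue (approx P γ) γ = ∅}

/-- The least infinite-valued model `M_P` of a program `P`. -/
def MP (P : Program L) : Interp L := fun A =>
  if degLT (approx P (depth P) A) (depth P) then approx P (depth P) A else WZ

/-! ### Three-valued semantics -/

/-- The three truth values `F < 0 < T`. -/
inductive TV3 : Type where
  | F : TV3
  | Z : TV3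
  | T : TV3
deriving DecidableEq

/-- Numeric coding of the three truth values. -/
def TV3.toNat : TV3 → ℕ
  | .F => 0
  | .Z => 1
  | .T => 2

instance : LinearOrder TV3 :=
  LinearOrder.lift' TV3.toNat (fun a b => by
    cases a <;> cases b <;> simp [TV3.toNat])

/-- A three-valued interpretation. -/
def Interp3 (L : Language) : Type := GroundAtom L → TV3

/-- Supremum of a set of three-valued truth values. -/
def sup3 (S : Set TV3) : TV3 :=
  if TV3.T ∈ S then .T else if TV3.Z ∈ S then .Z else .F

/-- Infimum of a set of three-valued truth values. -/
def inf3 (S : Set TV3) : TV3 :=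
  if TV3.F ∈ S then .F else if TV3.Z ∈ S then .Z else .T

/-- Three-valued negation. -/
def neg3 : TV3 → TV3
  | .F => .T
  | .Z => .Z
  | .T => .F

/-- The three-valued semantics of formulas. -/
def Formula.eval3 (K : Interp3 L) : Formula L → (ℕ → HU L) → TV3
  | .verum, _ => .T
  | .falsum, _ => .F
  | .atom p ts, h => K ⟨p, fun i => (ts i).evalT h⟩
  | .neg φ, h => neg3 (φ.eval3 K h)
  | .conj φ ψ, h => min (φ.eval3 K h) (ψ.eval3 K h)
  | .disj φ ψ, h => max (φ.eval3 K h) (ψ.eval3 K h)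
  | .ex v φ, h => sup3 (Set.range fun u : HU L => φ.eval3 K (Function.update h v u))
  | .all v φ, h => inf3 (Set.range fun u : HU L => φ.eval3 K (Function.update h v u))

/-- Collapsing all false values to `F` and all true values to `T`. -/
def collapse : W → TV3 := fun w =>
  match w.1 with
  | .F _ => .F
  | .zero => .Z
  | .T _ => .T

/-- The collapse of an infinite-valued interpretation. -/
def collapseI (I : Interp L) : Interp3 L := fun A => collapse (I A)

/-- `K` is a three-valued model of `P`. -/
def isModel3 (K : Interp3 L) (P : Program L) : Prop :=
  ∀ r ∈ P.rules, ∀ h : ℕ → HU L, r.body.eval3 K h ≤ r.headAtom.eval3 K h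

/-- The three-valued interpretation `M_{P,3}`. -/
def MP3 (P : Program L) : Interp3 L := collapseI (MP P)

/-- The negation degree of a formula. -/
def Formula.negDeg : Formula L → ℕ
  | .verum => 0
  | .falsum => 0
  | .atom _ _ => 0
  | .neg φ => φ.negDeg + 1
  | .conj φ ψ => max φ.negDeg ψ.negDeg
  | .disj φ ψ => max φ.negDeg ψ.negDeg
  | .all _ φ => φ.negDeg
  | .ex _ φ => φ.negDeg



/-! ### Auxiliary lemmas for Statement 6 -/

lemma ord_lt_add_one (a : Ordinal) : a < a + 1 := by
  rw [Ordinal.add_one_eq_succ]; exact Order.lt_succ a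

/-- Agreement of two truth values on all degrees `≤ α`. -/
def approxEq (α : Ordinal) (w w' : W) : Prop :=
  ∀ β ≤ α, (w.1 = TVPre.F β ↔ w'.1 = TVPre.F β) ∧ (w.1 = TVPre.T β ↔ w'.1 = TVPre.T β)

lemma approxEq_refl {α : Ordinal} {w : W} : approxEq α w w := fun _ _ => ⟨Iff.rfl, Iff.rfl⟩

lemma approxEq_symm {α : Ordinal} {w w' : W} (h : approxEq α w w') : approxEq α w' w :=
  fun β hβ => ⟨((h β hβ).1).symm, ((h β hβ).2).symm⟩

lemma W_lt_iff {x y : W} : x < y ↔ TVPre.lt x.1 y.1 := Iff.rfl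

lemma lt_of_F {x w : W} {β : Ordinal} (hw : w.1 = TVPre.F β) (h : x < w) :
    ∃ γ < β, x.1 = TVPre.F γ := by
  have h' : TVPre.lt x.1 w.1 := h
  rw [hw] at h'
  obtain ⟨(a | _ | a), hc⟩ := x
  · exact ⟨a, h', rfl⟩
  · exact absurd h' (by simp [TVPre.lt])
  · exact absurd h' (by simp [TVPre.lt])

lemma gt_of_T {x w : W} {β : Ordinal} (hw : w.1 = TVPre.T β) (h : w < x) :
    ∃ γ < β, x.1 = TVPre.T γ := by
  have h' : TVPre.lt w.1 x.1 := h
  rw [hw] at h'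
  obtain ⟨(a | _ | a), hc⟩ := x
  · exact absurd h' (by simp [TVPre.lt])
  · exact absurd h' (by simp [TVPre.lt])
  · exact ⟨a, h', rfl⟩

lemma F_lt_F {x w : W} {γ β : Ordinal} (hx : x.1 = TVPre.F γ) (hw : w.1 = TVPre.F β)
    (h : γ < β) : x < w := by
  rw [W_lt_iff, hx, hw]; exact h

lemma T_lt_T {x w : W} {γ β : Ordinal} (hx : x.1 = TVPre.T β) (hw : w.1 = TVPre.T γ)
    (h : γ < β) : x < w := by
  rw [W_lt_iff, hx, hw]; exact h

lemma le_of_F {x w : W} {β : Ordinal} (hw : w.1 = TVPre.F β) (h : x ≤ w) :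
    ∃ γ ≤ β, x.1 = TVPre.F γ := by
  rcases h.lt_or_eq with h | h
  · obtain ⟨γ, hγ, hx⟩ := lt_of_F hw h
    exact ⟨γ, hγ.le, hx⟩
  · exact ⟨β, le_rfl, h ▸ hw⟩

lemma ge_of_T {x w : W} {β : Ordinal} (hw : w.1 = TVPre.T β) (h : w ≤ x) :
    ∃ γ ≤ β, x.1 = TVPre.T γ := by
  rcases h.lt_or_eq with h | h
  · obtain ⟨γ, hγ, hx⟩ := gt_of_T hw h
    exact ⟨γ, hγ.le, hx⟩
  · exact ⟨β, le_rfl, h.symm ▸ hw⟩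

lemma F_le_F {x w : W} {γ β : Ordinal} (hx : x.1 = TVPre.F γ) (hw : w.1 = TVPre.F β)
    (h : γ ≤ β) : x ≤ w := by
  rcases h.lt_or_eq with h | h
  · exact le_of_lt (F_lt_F hx hw h)
  · exact le_of_eq (Subtype.ext (by rw [hx, hw, h]))

lemma T_le_T {x w : W} {γ β : Ordinal} (hx : x.1 = TVPre.T β) (hw : w.1 = TVPre.T γ)
    (h : γ ≤ β) : x ≤ w := by
  rcases h.lt_or_eq with h | h
  · exact le_of_lt (T_lt_T hx hw h)
  · exact le_of_eq (Subtype.ext (by rw [hx, hw, h]))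

/-! #### Negation -/

lemma Wneg_fst_F {w : W} {a : Ordinal} (h : w.1 = TVPre.F a) :
    (Wneg w).1 = TVPre.T (a + 1) := by
  obtain ⟨w1, hc⟩ := w
  cases (show w1 = TVPre.F a from h)
  rfl

lemma Wneg_fst_T {w : W} {a : Ordinal} (h : w.1 = TVPre.T a) :
    (Wneg w).1 = TVPre.F (a + 1) := by
  obtain ⟨w1, hc⟩ := w
  cases (show w1 = TVPre.T a from h)
  rfl

lemma Wneg_forward {α : Ordinal} {w w' : W} (h : approxEq α w w') {β : Ordinal} (hβ : β ≤ α) :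
    ((Wneg w).1 = TVPre.F β → (Wneg w').1 = TVPre.F β) ∧
    ((Wneg w).1 = TVPre.T β → (Wneg w').1 = TVPre.T β) := by
  obtain ⟨w1, hc⟩ := w
  constructor
  · intro hF
    cases w1 with
    | F a => exact absurd ((Wneg_fst_F (w := ⟨_, hc⟩) rfl).symm.trans hF) (by simp)
    | zero => exact absurd hF (by simp [Wneg, WZ])
    | T a =>
      have hb : β = a + 1 := (TVPre.F.injEq _ _).mp ((Wneg_fst_T (w := ⟨_, hc⟩) rfl).symm.trans hF) |>.symm
      have ha : a ≤ α := le_of_lt (lt_of_lt_of_le (hb ▸ ord_lt_add_one a) hβ)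
      have hw' : w'.1 = TVPre.T a := ((h a ha).2).mp rfl
      rw [Wneg_fst_T hw', hb]
  · intro hT
    cases w1 with
    | F a =>
      have hb : β = a + 1 := (TVPre.T.injEq _ _).mp ((Wneg_fst_F (w := ⟨_, hc⟩) rfl).symm.trans hT) |>.symm
      have ha : a ≤ α := le_of_lt (lt_of_lt_of_le (hb ▸ ord_lt_add_one a) hβ)
      have hw' : w'.1 = TVPre.F a := ((h a ha).1).mp rfl
      rw [Wneg_fst_F hw', hb]
    | zero => exact absurd hT (by simp [Wneg, WZ])
    | T a => exact absurd ((Wneg_fst_T (w := ⟨_, hc⟩) rfl).symm.trans hT) (by simp)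

lemma approxEq_neg {α : Ordinal} {w w' : W} (h : approxEq α w w') :
    approxEq α (Wneg w) (Wneg w') := fun β hβ =>
  ⟨⟨(Wneg_forward h hβ).1, (Wneg_forward (approxEq_symm h) hβ).1⟩,
   ⟨(Wneg_forward h hβ).2, (Wneg_forward (approxEq_symm h) hβ).2⟩⟩

/-! #### Min and max -/

lemma min_forward_F {α : Ordinal} {w1 w2 w1' w2' : W} (h1 : approxEq α w1 w1')
    (h2 : approxEq α w2 w2') {β : Ordinal} (hβ : β ≤ α)
    (hm : (min w1 w2).1 = TVPre.F β) : (min w1' w2').1 = TVPre.F β := by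
  rcases min_cases w1 w2 with ⟨he, hle⟩ | ⟨he, hlt⟩
  · rw [he] at hm
    have h1' : w1'.1 = TVPre.F β := ((h1 β hβ).1).mp hm
    have hle' : w1' ≤ w2' := by
      by_contra hcon
      push_neg at hcon
      obtain ⟨γ, hγβ, hv⟩ := lt_of_F h1' hcon
      have hv2 : w2.1 = TVPre.F γ := ((h2 γ (hγβ.le.trans hβ)).1).mpr hv
      exact absurd (F_lt_F hv2 hm hγβ) (not_lt.mpr hle)
    rw [min_eq_left hle']; exact h1'
  · rw [he] at hm
    have h2' : w2'.1 = TVPre.F β := ((h2 β hβ).1).mp hm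
    have hle' : w2' ≤ w1' := by
      by_contra hcon
      push_neg at hcon
      obtain ⟨γ, hγβ, hv⟩ := lt_of_F h2' hcon
      have hv1 : w1.1 = TVPre.F γ := ((h1 γ (hγβ.le.trans hβ)).1).mpr hv
      exact absurd (F_lt_F hv1 hm hγβ) (not_lt.mpr hlt.le)
    rw [min_eq_right hle']; exact h2'

lemma min_forward_T {α : Ordinal} {w1 w2 w1' w2' : W} (h1 : approxEq α w1 w1')
    (h2 : approxEq α w2 w2') {β : Ordinal} (hβ : β ≤ α)
    (hm : (min w1 w2).1 = TVPre.T β) : (min w1' w2').1 = TVPre.T β := by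
  rcases min_cases w1 w2 with ⟨he, hle⟩ | ⟨he, hlt⟩
  · rw [he] at hm
    have h1' : w1'.1 = TVPre.T β := ((h1 β hβ).2).mp hm
    obtain ⟨γ, hγβ, hv2⟩ := ge_of_T hm hle
    have h2' : w2'.1 = TVPre.T γ := ((h2 γ (hγβ.trans hβ)).2).mp hv2
    rw [min_eq_left (T_le_T h1' h2' hγβ)]; exact h1'
  · rw [he] at hm
    have h2' : w2'.1 = TVPre.T β := ((h2 β hβ).2).mp hm
    obtain ⟨γ, hγβ, hv1⟩ := ge_of_T hm hlt.le
    have h1' : w1'.1 = TVPre.T γ := ((h1 γ (hγβ.trans hβ)).2).mp hv1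
    rw [min_eq_right (T_le_T h2' h1' hγβ)]; exact h2'

lemma max_forward_F {α : Ordinal} {w1 w2 w1' w2' : W} (h1 : approxEq α w1 w1')
    (h2 : approxEq α w2 w2') {β : Ordinal} (hβ : β ≤ α)
    (hm : (max w1 w2).1 = TVPre.F β) : (max w1' w2').1 = TVPre.F β := by
  rcases max_cases w1 w2 with ⟨he, hle⟩ | ⟨he, hlt⟩
  · rw [he] at hm
    have h1' : w1'.1 = TVPre.F β := ((h1 β hβ).1).mp hm
    obtain ⟨γ, hγβ, hv2⟩ := le_of_F hm hle
    have h2' : w2'.1 = TVPre.F γ := ((h2 γ (hγβ.trans hβ)).1).mp hv2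
    rw [max_eq_left (F_le_F h2' h1' hγβ)]; exact h1'
  · rw [he] at hm
    have h2' : w2'.1 = TVPre.F β := ((h2 β hβ).1).mp hm
    obtain ⟨γ, hγβ, hv1⟩ := le_of_F hm hlt.le
    have h1' : w1'.1 = TVPre.F γ := ((h1 γ (hγβ.trans hβ)).1).mp hv1
    rw [max_eq_right (F_le_F h1' h2' hγβ)]; exact h2'

lemma max_forward_T {α : Ordinal} {w1 w2 w1' w2' : W} (h1 : approxEq α w1 w1')
    (h2 : approxEq α w2 w2') {β : Ordinal} (hβ : β ≤ α)
    (hm : (max w1 w2).1 = TVPre.T β) : (max w1' w2').1 = TVPre.T β := by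
  rcases max_cases w1 w2 with ⟨he, hle⟩ | ⟨he, hlt⟩
  · rw [he] at hm
    have h1' : w1'.1 = TVPre.T β := ((h1 β hβ).2).mp hm
    have hle' : w2' ≤ w1' := by
      by_contra hcon
      push_neg at hcon
      obtain ⟨γ, hγβ, hv⟩ := gt_of_T h1' hcon
      have hv2 : w2.1 = TVPre.T γ := ((h2 γ (hγβ.le.trans hβ)).2).mpr hv
      exact absurd (T_lt_T hm hv2 hγβ) (not_lt.mpr hle)
    rw [max_eq_left hle']; exact h1'
  · rw [he] at hm
    have h2' : w2'.1 = TVPre.T β := ((h2 β hβ).2).mp hm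
    have hle' : w1' ≤ w2' := by
      by_contra hcon
      push_neg at hcon
      obtain ⟨γ, hγβ, hv⟩ := gt_of_T h2' hcon
      have hv1 : w1.1 = TVPre.T γ := ((h1 γ (hγβ.le.trans hβ)).2).mpr hv
      exact absurd (T_lt_T hm hv1 hγβ) (not_lt.mpr hlt.le)
    rw [max_eq_right hle']; exact h2'

lemma approxEq_min {α : Ordinal} {w1 w2 w1' w2' : W} (h1 : approxEq α w1 w1')
    (h2 : approxEq α w2 w2') : approxEq α (min w1 w2) (min w1' w2') := fun β hβ =>
  ⟨⟨min_forward_F h1 h2 hβ, min_forward_F (approxEq_symm h1) (approxEq_symm h2) hβ⟩,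
   ⟨min_forward_T h1 h2 hβ, min_forward_T (approxEq_symm h1) (approxEq_symm h2) hβ⟩⟩

lemma approxEq_max {α : Ordinal} {w1 w2 w1' w2' : W} (h1 : approxEq α w1 w1')
    (h2 : approxEq α w2 w2') : approxEq α (max w1 w2) (max w1' w2') := fun β hβ =>
  ⟨⟨max_forward_F h1 h2 hβ, max_forward_F (approxEq_symm h1) (approxEq_symm h2) hβ⟩,
   ⟨max_forward_T h1 h2 hβ, max_forward_T (approxEq_symm h1) (approxEq_symm h2) hβ⟩⟩

/-! #### Sup and inf -/

/-- Back-and-forth relatedness of two sets of truth values. -/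
def SetRel (α : Ordinal) (M M' : Set W) : Prop :=
  (∀ w ∈ M, ∃ w' ∈ M', approxEq α w w') ∧ (∀ w' ∈ M', ∃ w ∈ M, approxEq α w w')

lemma SetRel.symm {α : Ordinal} {M M' : Set W} (h : SetRel α M M') : SetRel α M' M :=
  ⟨fun w' hw' => (h.2 w' hw').imp fun w hw => ⟨hw.1, approxEq_symm hw.2⟩,
   fun w hw => (h.1 w hw).imp fun w' hw' => ⟨hw'.1, approxEq_symm hw'.2⟩⟩

lemma bddAbove_FIdx (M : Set W) : BddAbove (FIdx M) :=
  ⟨omega1, fun _ hx => (mem_lt_omega1_of_FIdx hx).le⟩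

lemma bddAbove_TIdx (M : Set W) : BddAbove (TIdx M) :=
  ⟨omega1, fun _ hx => (mem_lt_omega1_of_TIdx hx).le⟩

lemma mem_shape_F {M : Set W} (h1 : ¬ (TIdx M).Nonempty) (h2 : WZ ∉ M) {w : W}
    (hw : w ∈ M) : ∃ γ ∈ FIdx M, w.1 = TVPre.F γ := by
  obtain ⟨(a | _ | a), hc⟩ := w
  · exact ⟨a, ⟨_, hw, rfl⟩, rfl⟩
  · exact absurd hw h2
  · exact absurd ⟨a, _, hw, rfl⟩ h1

lemma mem_shape_T {M : Set W} (h1 : ¬ (FIdx M).Nonempty) (h2 : WZ ∉ M) {w : W}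
    (hw : w ∈ M) : ∃ γ ∈ TIdx M, w.1 = TVPre.T γ := by
  obtain ⟨(a | _ | a), hc⟩ := w
  · exact absurd ⟨a, _, hw, rfl⟩ h1
  · exact absurd hw h2
  · exact ⟨a, ⟨_, hw, rfl⟩, rfl⟩

lemma Wsup_F_inv {M : Set W} {β : Ordinal} (h : (Wsup M).1 = TVPre.F β) :
    ¬ (TIdx M).Nonempty ∧ WZ ∉ M ∧ sSup (FIdx M) = β ∧ β < omega1 := by
  unfold Wsup at h
  split_ifs at h with h1 h2 h3
  · exact absurd h (by simp [WT])
  · exact absurd h (by simp [WZ])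
  · have hb : sSup (FIdx M) = β := by simpa [WF] using h
    exact ⟨h1, h2, hb, hb ▸ h3⟩
  · exact absurd h (by simp [WZ])

lemma Wsup_T_inv {M : Set W} {β : Ordinal} (h : (Wsup M).1 = TVPre.T β) :
    (TIdx M).Nonempty ∧ sInf (TIdx M) = β := by
  unfold Wsup at h
  split_ifs at h with h1 h2 h3
  · exact ⟨h1, by simpa [WT] using h⟩
  · exact absurd h (by simp [WZ])
  · exact absurd h (by simp [WF])
  · exact absurd h (by simp [WZ])

lemma Winf_F_inv {M : Set W} {β : Ordinal} (h : (Winf M).1 = TVPre.F β) :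
    (FIdx M).Nonempty ∧ sInf (FIdx M) = β := by
  unfold Winf at h
  split_ifs at h with h1 h2 h3
  · exact ⟨h1, by simpa [WF] using h⟩
  · exact absurd h (by simp [WZ])
  · exact absurd h (by simp [WT])
  · exact absurd h (by simp [WZ])

lemma Winf_T_inv {M : Set W} {β : Ordinal} (h : (Winf M).1 = TVPre.T β) :
    ¬ (FIdx M).Nonempty ∧ WZ ∉ M ∧ sSup (TIdx M) = β ∧ β < omega1 := by
  unfold Winf at h
  split_ifs at h with h1 h2 h3
  · exact absurd h (by simp [WF])
  · exact absurd h (by simp [WZ])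
  · have hb : sSup (TIdx M) = β := by simpa [WT] using h
    exact ⟨h1, h2, hb, hb ▸ h3⟩
  · exact absurd h (by simp [WZ])

lemma Wsup_eq_F {M : Set W} {β : Ordinal} (h1 : ¬ (TIdx M).Nonempty) (h2 : WZ ∉ M)
    (hb : sSup (FIdx M) = β) (hβ : β < omega1) : (Wsup M).1 = TVPre.F β := by
  unfold Wsup
  rw [dif_neg h1, if_neg h2, dif_pos (hb ▸ hβ)]
  simp [WF, hb]

lemma Wsup_eq_T {M : Set W} {β : Ordinal} (h1 : (TIdx M).Nonempty)
    (hb : sInf (TIdx M) = β) : (Wsup M).1 = TVPre.T β := by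
  unfold Wsup
  rw [dif_pos h1]
  simp [WT, hb]

lemma Winf_eq_F {M : Set W} {β : Ordinal} (h1 : (FIdx M).Nonempty)
    (hb : sInf (FIdx M) = β) : (Winf M).1 = TVPre.F β := by
  unfold Winf
  rw [dif_pos h1]
  simp [WF, hb]

lemma Winf_eq_T {M : Set W} {β : Ordinal} (h1 : ¬ (FIdx M).Nonempty) (h2 : WZ ∉ M)
    (hb : sSup (TIdx M) = β) (hβ : β < omega1) : (Winf M).1 = TVPre.T β := by
  unfold Winf
  rw [dif_neg h1, if_neg h2, dif_pos (hb ▸ hβ)]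
  simp [WT, hb]

lemma Wsup_forward_F {α : Ordinal} {M M' : Set W} (h : SetRel α M M') {β : Ordinal}
    (hβ : β ≤ α) (hs : (Wsup M).1 = TVPre.F β) : (Wsup M').1 = TVPre.F β := by
  obtain ⟨h1, h2, h3, h4⟩ := Wsup_F_inv hs
  have key : ∀ w' ∈ M', ∃ γ, γ ≤ β ∧ w'.1 = TVPre.F γ ∧ γ ∈ FIdx M := by
    intro w' hw'
    obtain ⟨w, hw, he⟩ := h.2 w' hw'
    obtain ⟨γ, hγF, hwγ⟩ := mem_shape_F h1 h2 hw
    have hγβ : γ ≤ β := h3 ▸ le_csSup (bddAbove_FIdx M) hγF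
    exact ⟨γ, hγβ, ((he γ (hγβ.trans hβ)).1).mp hwγ, hγF⟩
  have hT' : ¬ (TIdx M').Nonempty := by
    rintro ⟨γ, w', hw', hv⟩
    obtain ⟨γ', -, hF, -⟩ := key w' hw'
    rw [hv] at hF
    exact TVPre.noConfusion hF
  have hZ' : WZ ∉ M' := by
    intro hz
    obtain ⟨γ', -, hF, -⟩ := key _ hz
    exact TVPre.noConfusion hF
  have hFeq : FIdx M' = FIdx M := by
    ext γ
    constructor
    · rintro ⟨w', hw', hv⟩
      obtain ⟨γ', -, hF, hmem⟩ := key w' hw'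
      rw [hv] at hF
      cases (TVPre.F.injEq _ _).mp hF
      exact hmem
    · rintro ⟨w, hw, hv⟩
      obtain ⟨w', hw', he⟩ := h.1 w hw
      have hγβ : γ ≤ β := h3 ▸ le_csSup (bddAbove_FIdx M) ⟨w, hw, hv⟩
      exact ⟨w', hw', ((he γ (hγβ.trans hβ)).1).mp hv⟩
  exact Wsup_eq_F hT' hZ' (by rw [hFeq, h3]) h4

lemma Wsup_forward_T {α : Ordinal} {M M' : Set W} (h : SetRel α M M') {β : Ordinal}
    (hβ : β ≤ α) (hs : (Wsup M).1 = TVPre.T β) : (Wsup M').1 = TVPre.T β := by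
  obtain ⟨h1, h2⟩ := Wsup_T_inv hs
  have hβmem : β ∈ TIdx M := h2 ▸ csInf_mem h1
  obtain ⟨w, hw, hv⟩ := hβmem
  obtain ⟨w', hw', he⟩ := h.1 w hw
  have hv' : w'.1 = TVPre.T β := ((he β hβ).2).mp hv
  have hne' : (TIdx M').Nonempty := ⟨β, w', hw', hv'⟩
  have hle : sInf (TIdx M') ≤ β := csInf_le' ⟨w', hw', hv'⟩
  obtain ⟨w2', hw2', hv2⟩ := csInf_mem hne'
  obtain ⟨w2, hw2, he2⟩ := h.2 w2' hw2'
  have hv2' : w2.1 = TVPre.T (sInf (TIdx M')) := ((he2 _ (hle.trans hβ)).2).mpr hv2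
  have hge : β ≤ sInf (TIdx M') := h2 ▸ csInf_le' ⟨w2, hw2, hv2'⟩
  exact Wsup_eq_T hne' (le_antisymm hle hge)

lemma Winf_forward_F {α : Ordinal} {M M' : Set W} (h : SetRel α M M') {β : Ordinal}
    (hβ : β ≤ α) (hs : (Winf M).1 = TVPre.F β) : (Winf M').1 = TVPre.F β := by
  obtain ⟨h1, h2⟩ := Winf_F_inv hs
  have hβmem : β ∈ FIdx M := h2 ▸ csInf_mem h1
  obtain ⟨w, hw, hv⟩ := hβmem
  obtain ⟨w', hw', he⟩ := h.1 w hw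
  have hv' : w'.1 = TVPre.F β := ((he β hβ).1).mp hv
  have hne' : (FIdx M').Nonempty := ⟨β, w', hw', hv'⟩
  have hle : sInf (FIdx M') ≤ β := csInf_le' ⟨w', hw', hv'⟩
  obtain ⟨w2', hw2', hv2⟩ := csInf_mem hne'
  obtain ⟨w2, hw2, he2⟩ := h.2 w2' hw2'
  have hv2' : w2.1 = TVPre.F (sInf (FIdx M')) := ((he2 _ (hle.trans hβ)).1).mpr hv2
  have hge : β ≤ sInf (FIdx M') := h2 ▸ csInf_le' ⟨w2, hw2, hv2'⟩
  exact Winf_eq_F hne' (le_antisymm hle hge)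

lemma Winf_forward_T {α : Ordinal} {M M' : Set W} (h : SetRel α M M') {β : Ordinal}
    (hβ : β ≤ α) (hs : (Winf M).1 = TVPre.T β) : (Winf M').1 = TVPre.T β := by
  obtain ⟨h1, h2, h3, h4⟩ := Winf_T_inv hs
  have key : ∀ w' ∈ M', ∃ γ, γ ≤ β ∧ w'.1 = TVPre.T γ ∧ γ ∈ TIdx M := by
    intro w' hw'
    obtain ⟨w, hw, he⟩ := h.2 w' hw'
    obtain ⟨γ, hγT, hwγ⟩ := mem_shape_T h1 h2 hw
    have hγβ : γ ≤ β := h3 ▸ le_csSup (bddAbove_TIdx M) hγT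
    exact ⟨γ, hγβ, ((he γ (hγβ.trans hβ)).2).mp hwγ, hγT⟩
  have hF' : ¬ (FIdx M').Nonempty := by
    rintro ⟨γ, w', hw', hv⟩
    obtain ⟨γ', -, hT, -⟩ := key w' hw'
    rw [hv] at hT
    exact TVPre.noConfusion hT
  have hZ' : WZ ∉ M' := by
    intro hz
    obtain ⟨γ', -, hT, -⟩ := key _ hz
    exact TVPre.noConfusion hT
  have hTeq : TIdx M' = TIdx M := by
    ext γ
    constructor
    · rintro ⟨w', hw', hv⟩
      obtain ⟨γ', -, hT, hmem⟩ := key w' hw'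
      rw [hv] at hT
      cases (TVPre.T.injEq _ _).mp hT
      exact hmem
    · rintro ⟨w, hw, hv⟩
      obtain ⟨w', hw', he⟩ := h.1 w hw
      have hγβ : γ ≤ β := h3 ▸ le_csSup (bddAbove_TIdx M) ⟨w, hw, hv⟩
      exact ⟨w', hw', ((he γ (hγβ.trans hβ)).2).mp hv⟩
  exact Winf_eq_T hF' hZ' (by rw [hTeq, h3]) h4

lemma approxEq_Wsup {α : Ordinal} {M M' : Set W} (h : SetRel α M M') :
    approxEq α (Wsup M) (Wsup M') := fun β hβ =>
  ⟨⟨Wsup_forward_F h hβ, Wsup_forward_F h.symm hβ⟩,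
   ⟨Wsup_forward_T h hβ, Wsup_forward_T h.symm hβ⟩⟩

lemma approxEq_Winf {α : Ordinal} {M M' : Set W} (h : SetRel α M M') :
    approxEq α (Winf M) (Winf M') := fun β hβ =>
  ⟨⟨Winf_forward_F h hβ, Winf_forward_F h.symm hβ⟩,
   ⟨Winf_forward_T h hβ, Winf_forward_T h.symm hβ⟩⟩

/-! #### Semantics and `eqa` -/

lemma eqa_iff {L : Language} {α : Ordinal} {I J : Interp L} :
    eqa α I J ↔ ∀ A, approxEq α (I A) (J A) := by
  constructor
  · intro h A β hβ
    obtain ⟨h1, h2⟩ := h β hβ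
    exact ⟨Set.ext_iff.mp h1 A, Set.ext_iff.mp h2 A⟩
  · intro h β hβ
    exact ⟨Set.ext fun A => (h A β hβ).1, Set.ext fun A => (h A β hβ).2⟩

lemma eqa_symm {L : Language} {α : Ordinal} {I J : Interp L} (h : eqa α I J) : eqa α J I :=
  fun β hβ => ⟨((h β hβ).1).symm, ((h β hβ).2).symm⟩

lemma eqa_trans {L : Language} {α : Ordinal} {I J K : Interp L} (h1 : eqa α I J)
    (h2 : eqa α J K) : eqa α I K :=
  fun β hβ => ⟨((h1 β hβ).1).trans ((h2 β hβ).1), ((h1 β hβ).2).trans ((h2 β hβ).2)⟩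

lemma eval_approxEq {L : Language} {α : Ordinal} {I J : Interp L}
    (h : ∀ A, approxEq α (I A) (J A)) (φ : Formula L) :
    ∀ g : ℕ → HU L, approxEq α (φ.eval I g) (φ.eval J g) := by
  induction φ with
  | verum => intro g; exact approxEq_refl
  | falsum => intro g; exact approxEq_refl
  | atom p ts => intro g; exact h _
  | neg φ ih => intro g; exact approxEq_neg (ih g)
  | conj φ ψ ihφ ihψ => intro g; exact approxEq_min (ihφ g) (ihψ g)
  | disj φ ψ ihφ ihψ => intro g; exact approxEq_max (ihφ g) (ihψ g)
  | all v φ ih =>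
    intro g
    apply approxEq_Winf
    constructor
    · rintro w ⟨u, rfl⟩; exact ⟨_, ⟨u, rfl⟩, ih _⟩
    · rintro w' ⟨u, rfl⟩; exact ⟨_, ⟨u, rfl⟩, ih _⟩
  | ex v φ ih =>
    intro g
    apply approxEq_Wsup
    constructor
    · rintro w ⟨u, rfl⟩; exact ⟨_, ⟨u, rfl⟩, ih _⟩
    · rintro w' ⟨u, rfl⟩; exact ⟨_, ⟨u, rfl⟩, ih _⟩

lemma TP_eqa {L : Language} {α : Ordinal} {I J : Interp L} (P : Program L)
    (h : eqa α I J) : eqa α (TP P I) (TP P J) := by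
  rw [eqa_iff] at h ⊢
  intro A
  apply approxEq_Wsup
  constructor
  · rintro w ⟨φ, hφ, rfl⟩
    exact ⟨φ.evalClosed J, ⟨φ, hφ, rfl⟩, eval_approxEq h φ _⟩
  · rintro w' ⟨φ, hφ, rfl⟩
    exact ⟨φ.evalClosed I, ⟨φ, hφ, rfl⟩, eval_approxEq h φ _⟩


/-- the union of a coherent chain of prefixed points is a prefixed point. -/
theorem union_sqa_TP {L : Language} (P : Program L) (α : Ordinal) (hα : α < omega1)
    (Ig : Ordinal → Interp L)
    (hcoh : ∀ γ < α, ∀ ζ < γ, eqa ζ (Ig ζ) (Ig γ))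
    (hstep : ∀ γ < α, sqa (γ + 1) (Ig γ) (TP P (Ig γ))) :
    sqa α (unionInterp α hα fun γ _ => Ig γ)
      (TP P (unionInterp α hα fun γ _ => Ig γ)) := by
  classical
  set J : Interp L := unionInterp α hα fun γ _ => Ig γ with hJ
  -- the basic case analysis for values of the union
  have L0 : ∀ A, (∃ ζ, ζ < α ∧ J A = Ig ζ A ∧
      ((Ig ζ A).1 = TVPre.F ζ ∨ (Ig ζ A).1 = TVPre.T ζ)) ∨
      ((¬ ∃ ζ, ∃ _ : ζ < α, (Ig ζ A).1 = TVPre.F ζ ∨ (Ig ζ A).1 = TVPre.T ζ) ∧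
        J A = WF α hα) := by
    intro A
    by_cases hc : ∃ ζ, ∃ _ : ζ < α, (Ig ζ A).1 = TVPre.F ζ ∨ (Ig ζ A).1 = TVPre.T ζ
    · left
      refine ⟨hc.choose, hc.choose_spec.choose, ?_, hc.choose_spec.choose_spec⟩
      show unionInterp α hα (fun γ _ => Ig γ) A = _
      unfold unionInterp
      rw [dif_pos hc]
    · right
      refine ⟨hc, ?_⟩
      show unionInterp α hα (fun γ _ => Ig γ) A = _
      unfold unionInterp
      rw [dif_neg hc]
  -- pointwise characterization of the union at each degree < α
  have L1 : ∀ ζ, ζ < α → ∀ A,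
      ((J A).1 = TVPre.F ζ ↔ (Ig ζ A).1 = TVPre.F ζ) ∧
      ((J A).1 = TVPre.T ζ ↔ (Ig ζ A).1 = TVPre.T ζ) := by
    intro ζ hζ A
    rcases L0 A with ⟨ζ₀, hζ₀, hJA, hval⟩ | ⟨hne, hJA⟩
    · constructor
      · constructor
        · intro hF
          rw [hJA] at hF
          rcases hval with hv | hv
          · rw [hv] at hF
            cases (TVPre.F.injEq _ _).mp hF
            rw [← hv] at hF
            exact hF.symm ▸ hv
          · rw [hv] at hF; exact absurd hF (by simp)
        · intro hF
          rw [hJA]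
          rcases lt_trichotomy ζ ζ₀ with hlt | heq | hgt
          · exact (Set.ext_iff.mp ((hcoh ζ₀ hζ₀ ζ hlt) ζ le_rfl).1 A).mp hF
          · exact heq ▸ hF
          · exfalso
            rcases hval with hv | hv
            · have h2 : (Ig ζ A).1 = TVPre.F ζ₀ :=
                (Set.ext_iff.mp ((hcoh ζ hζ ζ₀ hgt) ζ₀ le_rfl).1 A).mp hv
              rw [hF] at h2
              exact absurd ((TVPre.F.injEq _ _).mp h2) (ne_of_gt hgt)
            · have h2 : (Ig ζ A).1 = TVPre.T ζ₀ :=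
                (Set.ext_iff.mp ((hcoh ζ hζ ζ₀ hgt) ζ₀ le_rfl).2 A).mp hv
              rw [hF] at h2
              exact TVPre.noConfusion h2
      · constructor
        · intro hT
          rw [hJA] at hT
          rcases hval with hv | hv
          · rw [hv] at hT; exact absurd hT (by simp)
          · rw [hv] at hT
            cases (TVPre.T.injEq _ _).mp hT
            exact hv
        · intro hT
          rw [hJA]
          rcases lt_trichotomy ζ ζ₀ with hlt | heq | hgt
          · exact (Set.ext_iff.mp ((hcoh ζ₀ hζ₀ ζ hlt) ζ le_rfl).2 A).mp hT
          · exact heq ▸ hT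
          · exfalso
            rcases hval with hv | hv
            · have h2 : (Ig ζ A).1 = TVPre.F ζ₀ :=
                (Set.ext_iff.mp ((hcoh ζ hζ ζ₀ hgt) ζ₀ le_rfl).1 A).mp hv
              rw [hT] at h2
              exact TVPre.noConfusion h2
            · have h2 : (Ig ζ A).1 = TVPre.T ζ₀ :=
                (Set.ext_iff.mp ((hcoh ζ hζ ζ₀ hgt) ζ₀ le_rfl).2 A).mp hv
              rw [hT] at h2
              exact absurd ((TVPre.T.injEq _ _).mp h2) (ne_of_gt hgt)
    · constructor
      · constructor
        · intro hF
          rw [hJA] at hF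
          exact absurd ((TVPre.F.injEq _ _).mp (show TVPre.F α = TVPre.F ζ from hF))
            (ne_of_gt hζ)
        · intro hF
          exact absurd ⟨ζ, hζ, Or.inl hF⟩ hne
      · constructor
        · intro hT
          rw [hJA] at hT
          exact TVPre.noConfusion (show TVPre.F α = TVPre.T ζ from hT)
        · intro hT
          exact absurd ⟨ζ, hζ, Or.inr hT⟩ hne
  -- J agrees with Ig ζ up to degree ζ
  have eqaJ : ∀ ζ, ζ < α → eqa ζ J (Ig ζ) := by
    intro ζ hζ β hβ
    have hβα : β < α := lt_of_le_of_lt hβ hζ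
    have trans : ∀ A, ((Ig β A).1 = TVPre.F β ↔ (Ig ζ A).1 = TVPre.F β) ∧
        ((Ig β A).1 = TVPre.T β ↔ (Ig ζ A).1 = TVPre.T β) := by
      intro A
      rcases hβ.lt_or_eq with hlt | heq
      · exact ⟨Set.ext_iff.mp ((hcoh ζ hζ β hlt) β le_rfl).1 A,
          Set.ext_iff.mp ((hcoh ζ hζ β hlt) β le_rfl).2 A⟩
      · subst heq; exact ⟨Iff.rfl, Iff.rfl⟩
    constructor
    · ext A
      exact ((L1 β hβα A).1).trans (trans A).1
    · ext A
      exact ((L1 β hβα A).2).trans (trans A).2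
  -- Part 1 : J agrees with TP P J below α
  have part1 : ∀ β, β < α → eqa β J (TP P J) := by
    intro β hβ
    have E1 : eqa β J (Ig β) := eqaJ β hβ
    have E2 : eqa β (Ig β) (TP P (Ig β)) := by
      intro ζ hζ
      exact (hstep β hβ).1 ζ (lt_of_le_of_lt hζ (ord_lt_add_one β)) ζ le_rfl
    have E3 : eqa β (TP P (Ig β)) (TP P J) := TP_eqa P (eqa_symm E1)
    exact eqa_trans (eqa_trans E1 E2) E3
  refine ⟨part1, ?_, ?_⟩
  · -- Ifalse (TP P J) α ⊆ Ifalse J α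
    intro A hA
    have hA' : (TP P J A).1 = TVPre.F α := hA
    rcases L0 A with ⟨ζ, hζ, hJA, hval⟩ | ⟨-, hJA⟩
    · exfalso
      rcases hval with hv | hv
      · have hJF : (J A).1 = TVPre.F ζ := by rw [hJA]; exact hv
        have : (TP P J A).1 = TVPre.F ζ :=
          (Set.ext_iff.mp ((part1 ζ hζ) ζ le_rfl).1 A).mp hJF
        rw [hA'] at this
        exact absurd ((TVPre.F.injEq _ _).mp this).symm (ne_of_lt hζ)
      · have hJT : (J A).1 = TVPre.T ζ := by rw [hJA]; exact hv
        have : (TP P J A).1 = TVPre.T ζ :=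
          (Set.ext_iff.mp ((part1 ζ hζ) ζ le_rfl).2 A).mp hJT
        rw [hA'] at this
        exact TVPre.noConfusion this
    · show (J A).1 = TVPre.F α
      rw [hJA]
      rfl
  · -- Itrue J α ⊆ Itrue (TP P J) α
    intro A hA
    exfalso
    have hA' : (J A).1 = TVPre.T α := hA
    rcases L0 A with ⟨ζ, hζ, hJA, hval⟩ | ⟨-, hJA⟩
    · rw [hJA] at hA'
      rcases hval with hv | hv
      · rw [hv] at hA'; exact TVPre.noConfusion hA'
      · rw [hv] at hA'
        exact absurd ((TVPre.T.injEq _ _).mp hA') (ne_of_lt hζ)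
    · rw [hJA] at hA'
      exact TVPre.noConfusion (show TVPre.F α = TVPre.T α from hA')


end ILP
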